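/- If q is an odd prime power and S is a (q+2)-element subset of P^2(F_q), then there are at most two points P in S with the property that no line through P contains more than two points of S. -/

import Mathlib

open Projectivization

instance projFinite (K V : Type*) [DivisionRing K] [AddCommGroup V] [Module K V]
    [Finite V] : Finite (Projectivization K V) :=
  Quotient.finite _

/-- A nonzero functional on a 3-dimensional space has 2-dimensional kernel. -/
lemma aux_finrank_ker (F : Type) [Field F] (ψ : (Fin 3 → F) →ₗ[F] F) (hψ : ψ ≠ 0) :
    Module.finrank F (LinearMap.ker ψ) = 2 := by
  have h := LinearMap.finrank_range_add_finrank_ker ψ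
  have hr : Module.finrank F (LinearMap.range ψ) = 1 := by
    have hne : LinearMap.range ψ ≠ ⊥ := by
      rwa [ne_eq, LinearMap.range_eq_bot]
    have h1 : Module.finrank F (LinearMap.range ψ) ≤ Module.finrank F F :=
      Submodule.finrank_le _
    rw [Module.finrank_self] at h1
    have h0 : Module.finrank F (LinearMap.range ψ) ≠ 0 := by
      rw [ne_eq, Submodule.finrank_eq_zero]
      exact hne
    omega
  rw [hr] at h
  simp only [Module.finrank_fin_fun] at h
  omega

/-- Product of all nonzero elements of a finite field is -1. -/
lemma aux_prod_nonzero (F : Type) [Field F] [Fintype F] [DecidableEq F] :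
    ∏ x ∈ Finset.univ.erase (0 : F), x = -1 := by
  have h := FiniteField.prod_univ_units_id_eq_neg_one (K := F)
  have key : ∏ x ∈ Finset.univ.erase (0 : F), x = ((∏ x : Fˣ, x : Fˣ) : F) := by
    rw [← Units.coeHom_apply, map_prod]
    refine (Finset.prod_bij (fun (a : Fˣ) (_ : a ∈ Finset.univ) => (a : F)) ?_ ?_ ?_ ?_).symm
    · intro a _
      exact Finset.mem_erase.mpr ⟨a.ne_zero, Finset.mem_univ _⟩
    · intro a _ b _ hab
      exact Units.ext hab
    · intro b hb
      exact ⟨Units.mk0 b (Finset.mem_erase.mp hb).1, Finset.mem_univ _, rfl⟩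
    · intro a _
      rfl
  rw [key, h]
  simp

theorem statement18 (F : Type) [Field F] [Fintype F] (hodd : Odd (Fintype.card F))
    (S : Set (Projectivization F (Fin 3 → F)))
    (hcard : S.ncard = Fintype.card F + 2) :
    {P ∈ S | ∀ W : Submodule F (Fin 3 → F), Module.finrank F W = 2 →
        P.submodule ≤ W → {x ∈ S | x.submodule ≤ W}.ncard ≤ 2}.ncard ≤ 2 := by
  classical
  by_contra hcon
  push_neg at hcon
  set G := {P ∈ S | ∀ W : Submodule F (Fin 3 → F), Module.finrank F W = 2 →
        P.submodule ≤ W → {x ∈ S | x.submodule ≤ W}.ncard ≤ 2} with hGdef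
  obtain ⟨P1, h1, P2, h2, P3, h3, h12, h13, h23⟩ :=
    (Set.two_lt_ncard (Set.toFinite _)).mp hcon
  obtain ⟨hP1S, hP1g⟩ := h1
  obtain ⟨hP2S, hP2g⟩ := h2
  obtain ⟨hP3S, hP3g⟩ := h3
  -- Key uniqueness lemma: a line through a good point contains at most one other point of S
  have L1 : ∀ P, P ∈ G → ∀ W : Submodule F (Fin 3 → F), Module.finrank F W = 2 →
      Projectivization.submodule P ≤ W → ∀ Q Q', Q ∈ S → Q' ∈ S → Q ≠ P → Q' ≠ P →
      Projectivization.submodule Q ≤ W → Projectivization.submodule Q' ≤ W → Q = Q' := by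
    rintro P ⟨hPS, hPg⟩ W hW hPW Q Q' hQ hQ' hQP hQ'P hQW hQ'W
    by_contra hne
    have hsub : ({P, Q, Q'} : Set _) ⊆ {x ∈ S | Projectivization.submodule x ≤ W} := by
      intro x hx
      simp only [Set.mem_insert_iff, Set.mem_singleton_iff] at hx
      rcases hx with rfl | rfl | rfl
      · exact ⟨hPS, hPW⟩
      · exact ⟨hQ, hQW⟩
      · exact ⟨hQ', hQ'W⟩
    have hc3 : ({P, Q, Q'} : Set _).ncard = 3 :=
      Set.ncard_eq_three.mpr ⟨P, Q, Q', Ne.symm hQP, Ne.symm hQ'P, hne, rfl⟩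
    have hle := Set.ncard_le_ncard hsub (Set.toFinite _)
    have := hPg W hW hPW
    omega
  -- distinct projective points have non-proportional representatives
  have hrep_ne : ∀ (A B : Projectivization F (Fin 3 → F)), A ≠ B → ∀ a : F,
      a • B.rep ≠ A.rep := by
    intro A B hAB a ha
    apply hAB
    rw [← A.mk_rep, ← B.mk_rep]
    exact (Projectivization.mk_eq_mk_iff' F _ _ _ _).mpr ⟨a, ha⟩
  have hli23 : LinearIndependent F ![P2.rep, P3.rep] := by
    rw [linearIndependent_fin2]
    constructor
    · simpa using P3.rep_nonzero
    · intro a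
      simpa using hrep_ne P2 P3 h23 a
  have hnotmem : P1.rep ∉ Submodule.span F (Set.range ![P2.rep, P3.rep]) := by
    intro hmem
    set W := Submodule.span F (Set.range ![P2.rep, P3.rep]) with hWdef
    have hWrank : Module.finrank F W = 2 := by
      rw [hWdef, finrank_span_eq_card hli23]
      simp
    have hP2W : Projectivization.submodule P2 ≤ W := by
      rw [Projectivization.submodule_eq, Submodule.span_singleton_le_iff_mem]
      exact Submodule.subset_span ⟨0, rfl⟩
    have hP3W : Projectivization.submodule P3 ≤ W := by
      rw [Projectivization.submodule_eq, Submodule.span_singleton_le_iff_mem]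
      exact Submodule.subset_span ⟨1, rfl⟩
    have hP1W : Projectivization.submodule P1 ≤ W := by
      rw [Projectivization.submodule_eq, Submodule.span_singleton_le_iff_mem]
      exact hmem
    exact h13 (L1 P2 ⟨hP2S, hP2g⟩ W hWrank hP2W P1 P3 hP1S hP3S h12 (Ne.symm h23) hP1W hP3W)
  have hli : LinearIndependent F ![P1.rep, P2.rep, P3.rep] :=
    linearIndependent_fin_cons.mpr ⟨hli23, hnotmem⟩
  have hdim : Fintype.card (Fin 3) = Module.finrank F (Fin 3 → F) := by simp
  set b : Module.Basis (Fin 3) F (Fin 3 → F) := basisOfLinearIndependentOfCardEqFinrank hli hdim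
    with hbdef
  have hbco : ⇑b = ![P1.rep, P2.rep, P3.rep] :=
    coe_basisOfLinearIndependentOfCardEqFinrank hli hdim
  have hb : ∀ k : Fin 3, (![P1, P2, P3] k).rep = b k := by
    intro k
    rw [hbco]
    fin_cases k <;> rfl
  -- the family of linear functionals cutting out lines
  set ψ : Fin 3 → Fin 3 → F → ((Fin 3 → F) →ₗ[F] F) :=
    fun i j t => b.coord i - t • b.coord j with hψdef
  have hψapp : ∀ i j t v, ψ i j t v = b.repr v i - t * b.repr v j := by
    intro i j t v
    simp [hψdef, Module.Basis.coord_apply]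
  have hψb : ∀ i j t (k : Fin 3),
      ψ i j t (b k) = (if k = i then (1:F) else 0) - t * (if k = j then 1 else 0) := by
    intro i j t k
    rw [hψapp]
    simp [Module.Basis.repr_self, Finsupp.single_apply, eq_comm]
  have hψne : ∀ i j t, i ≠ j → ψ i j t ≠ 0 := by
    intro i j t hij h0
    have h := hψb i j t i
    rw [h0] at h
    simp [hij] at h
  have hPtG : ∀ k : Fin 3, (![P1, P2, P3] k) ∈ G := by
    intro k
    fin_cases k
    · exact ⟨hP1S, hP1g⟩
    · exact ⟨hP2S, hP2g⟩
    · exact ⟨hP3S, hP3g⟩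
  have hmem : ∀ (f : (Fin 3 → F) →ₗ[F] F) (Q : Projectivization F (Fin 3 → F)),
      Projectivization.submodule Q ≤ LinearMap.ker f ↔ f Q.rep = 0 := by
    intro f Q
    rw [Projectivization.submodule_eq, Submodule.span_singleton_le_iff_mem, LinearMap.mem_ker]
  have master : ∀ (f : (Fin 3 → F) →ₗ[F] F), f ≠ 0 → ∀ g : Fin 3,
      f ((![P1, P2, P3] g).rep) = 0 →
      ∀ Q Q', Q ∈ S → Q' ∈ S → Q ≠ ![P1, P2, P3] g → Q' ≠ ![P1, P2, P3] g →
      f Q.rep = 0 → f Q'.rep = 0 → Q = Q' := by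
    intro f hf g hg Q Q' hQ hQ' hQg hQ'g h0 h0'
    exact L1 _ (hPtG g) (LinearMap.ker f) (aux_finrank_ker F f hf) ((hmem f _).mpr hg)
      Q Q' hQ hQ' hQg hQ'g ((hmem f Q).mpr h0) ((hmem f Q').mpr h0')
  -- the remaining points
  set S' : Set (Projectivization F (Fin 3 → F)) := S \ {P1, P2, P3} with hS'def
  have hsubS : ({P1, P2, P3} : Set _) ⊆ S := by
    intro x hx
    simp only [Set.mem_insert_iff, Set.mem_singleton_iff] at hx
    rcases hx with rfl | rfl | rfl
    · exact hP1S
    · exact hP2S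
    · exact hP3S
  have hc3 : ({P1, P2, P3} : Set _).ncard = 3 :=
    Set.ncard_eq_three.mpr ⟨P1, P2, P3, h12, h13, h23, rfl⟩
  have hS'card : S'.ncard = Fintype.card F - 1 := by
    rw [hS'def, Set.ncard_diff hsubS (Set.toFinite _), hc3, hcard]
    omega
  have hQnePt : ∀ Q ∈ S', ∀ k : Fin 3, Q ≠ ![P1, P2, P3] k := by
    intro Q hQ k h
    apply hQ.2
    fin_cases k <;> simp [h]
  -- coordinates of remaining points are all nonzero
  have hrepnz : ∀ Q ∈ S', ∀ i : Fin 3, b.repr Q.rep i ≠ 0 := by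
    intro Q hQ i hz
    have hQS := hQ.1
    fin_cases i <;>
      [(have hz' : b.repr Q.rep (0 : Fin 3) = 0 := hz);
       (have hz' : b.repr Q.rep (1 : Fin 3) = 0 := hz);
       (have hz' : b.repr Q.rep (2 : Fin 3) = 0 := hz)]
    · refine hQnePt Q hQ 2 (master (ψ 0 1 0) (hψne 0 1 0 (by decide)) 1 ?_ Q
        (![P1, P2, P3] 2) hQS hP3S (hQnePt Q hQ 1) (h23.symm) ?_ ?_)
      · rw [hb 1, hψb]; norm_num [Fin.ext_iff]
      · rw [hψapp, hz']; ring
      · rw [hb 2, hψb]; norm_num [Fin.ext_iff]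
    · refine hQnePt Q hQ 2 (master (ψ 1 0 0) (hψne 1 0 0 (by decide)) 0 ?_ Q
        (![P1, P2, P3] 2) hQS hP3S (hQnePt Q hQ 0) (h13.symm) ?_ ?_)
      · rw [hb 0, hψb]; norm_num [Fin.ext_iff]
      · rw [hψapp, hz']; ring
      · rw [hb 2, hψb]; norm_num [Fin.ext_iff]
    · refine hQnePt Q hQ 1 (master (ψ 2 0 0) (hψne 2 0 0 (by decide)) 0 ?_ Q
        (![P1, P2, P3] 1) hQS hP2S (hQnePt Q hQ 0) (h12.symm) ?_ ?_)
      · rw [hb 0, hψb]; norm_num [Fin.ext_iff]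
      · rw [hψapp, hz']; ring
      · rw [hb 1, hψb]; norm_num [Fin.ext_iff]
  -- injectivity of coordinate-ratio maps
  have keyinj : ∀ (i j g : Fin 3), i ≠ j → g ≠ i → g ≠ j →
      ∀ Q ∈ S', ∀ Q' ∈ S',
      b.repr Q.rep i / b.repr Q.rep j = b.repr Q'.rep i / b.repr Q'.rep j → Q = Q' := by
    intro i j g hij hgi hgj Q hQ Q' hQ' heq
    refine master (ψ i j (b.repr Q.rep i / b.repr Q.rep j))
      (hψne i j _ hij) g ?_ Q Q' hQ.1 hQ'.1
      (hQnePt Q hQ g) (hQnePt Q' hQ' g) ?_ ?_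
    · rw [hb g, hψb]
      simp [hgi, hgj]
    · rw [hψapp]
      have hj := hrepnz Q hQ j
      field_simp
      ring
    · rw [hψapp, heq]
      have hj' := hrepnz Q' hQ' j
      field_simp
      ring
  -- products over the remaining points
  have hSfin : S'.Finite := Set.toFinite _
  set T : Finset (Projectivization F (Fin 3 → F)) := hSfin.toFinset with hTdef
  have hmemT : ∀ Q, Q ∈ T ↔ Q ∈ S' := fun Q => hSfin.mem_toFinset
  have hTcard : T.card = Fintype.card F - 1 := by
    rw [← Set.ncard_eq_toFinset_card S' hSfin, hS'card]
  have hprod : ∀ φ : Projectivization F (Fin 3 → F) → F, (∀ Q ∈ S', φ Q ≠ 0) →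
      (∀ Q ∈ S', ∀ Q' ∈ S', φ Q = φ Q' → Q = Q') → ∏ Q ∈ T, φ Q = -1 := by
    intro φ hnz hinj
    have hinjT : ∀ x ∈ T, ∀ y ∈ T, φ x = φ y → x = y := by
      intro x hx y hy h
      exact hinj x ((hmemT x).mp hx) y ((hmemT y).mp hy) h
    have himg : T.image φ = Finset.univ.erase (0 : F) := by
      apply Finset.eq_of_subset_of_card_le
      · intro x hx
        obtain ⟨Q, hQ, rfl⟩ := Finset.mem_image.mp hx
        exact Finset.mem_erase.mpr ⟨hnz Q ((hmemT Q).mp hQ), Finset.mem_univ _⟩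
      · rw [Finset.card_image_of_injOn hinjT, hTcard,
          Finset.card_erase_of_mem (Finset.mem_univ _), Finset.card_univ]
    calc ∏ Q ∈ T, φ Q = ∏ x ∈ T.image φ, x := Eq.symm (Finset.prod_image (f := fun x => x) hinjT)
      _ = -1 := by rw [himg]; exact aux_prod_nonzero F
  have e1 := hprod (fun Q => b.repr Q.rep 1 / b.repr Q.rep 2)
    (fun Q hQ => div_ne_zero (hrepnz Q hQ 1) (hrepnz Q hQ 2))
    (fun Q hQ Q' hQ' h => keyinj 1 2 0 (by decide) (by decide) (by decide) Q hQ Q' hQ' h)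
  have e2 := hprod (fun Q => b.repr Q.rep 0 / b.repr Q.rep 2)
    (fun Q hQ => div_ne_zero (hrepnz Q hQ 0) (hrepnz Q hQ 2))
    (fun Q hQ Q' hQ' h => keyinj 0 2 1 (by decide) (by decide) (by decide) Q hQ Q' hQ' h)
  have e3 := hprod (fun Q => b.repr Q.rep 1 / b.repr Q.rep 0)
    (fun Q hQ => div_ne_zero (hrepnz Q hQ 1) (hrepnz Q hQ 0))
    (fun Q hQ Q' hQ' h => keyinj 1 0 2 (by decide) (by decide) (by decide) Q hQ Q' hQ' h)
  have hsplit : (∏ Q ∈ T, (b.repr Q.rep 1 / b.repr Q.rep 0)) =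
      (∏ Q ∈ T, (b.repr Q.rep 1 / b.repr Q.rep 2)) /
      (∏ Q ∈ T, (b.repr Q.rep 0 / b.repr Q.rep 2)) := by
    rw [← Finset.prod_div_distrib]
    apply Finset.prod_congr rfl
    intro Q hQ
    have h0 := hrepnz Q ((hmemT Q).mp hQ) 0
    have h2 := hrepnz Q ((hmemT Q).mp hQ) 2
    field_simp
  rw [e1, e2, e3] at hsplit
  norm_num at hsplit
  -- hsplit : (-1 : F) = 1  (or similar) gives characteristic 2
  have h2 : (2 : F) = 0 := by linear_combination -hsplit
  have hchar : ringChar F = 2 :=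
    CharP.ringChar_of_prime_eq_zero Nat.prime_two (by exact_mod_cast h2)
  have heven := FiniteField.even_card_iff_char_two.mp hchar
  rw [Nat.odd_iff] at hodd
  omega
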